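/- Let E be a real inner product space, let n ≥ 1, let v : Fin n → E with v j ≠ 0 for some j, and let D be the n × n Gram matrix D(k,l) = ⟪v k, v l⟫, which is Hermitian (symmetric). Then the largest eigenvalue of D is the greatest element of the set {Σ_i ⟪ζ, v i⟫² : ζ ∈ span{v 0, …, v (n−1)}, ‖ζ‖ = 1}; that is, the maximum over unit vectors ζ in the span of the v i of Σ_i ⟪ζ, v i⟫² is attained and equals max_k λ_k where λ_0,…,λ_{n−1} are the eigenvalues of D. -/

import Mathlib

open scoped RealInnerProductSpace

open Matrix

lemma gram_dot_aux {n : ℕ} (D : Matrix (Fin n) (Fin n) ℝ) (hD : D.IsHermitian)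
    {μ : ℝ} (hnn : ∀ k, 0 ≤ hD.eigenvalues k) (hμ : ∀ k, hD.eigenvalues k ≤ μ)
    (c : Fin n → ℝ) :
    (∑ i, ((D *ᵥ c) i)^2 ≤ μ * (c ⬝ᵥ (D *ᵥ c))) ∧ (c ⬝ᵥ (D *ᵥ c) ≤ μ * ∑ i, (c i)^2) := by
  classical
  set b := hD.eigenvectorBasis with hb
  set L := hD.eigenvalues with hL
  have hDT : Dᵀ = D := by simpa [Matrix.IsSymm] using hD
  set x : EuclideanSpace ℝ (Fin n) := (WithLp.equiv 2 _).symm c with hx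
  set z : EuclideanSpace ℝ (Fin n) := (WithLp.equiv 2 _).symm (D *ᵥ c) with hz
  have hinner : ∀ (w : EuclideanSpace ℝ (Fin n)) (d : Fin n → ℝ),
      ⟪w, (WithLp.equiv 2 _).symm d⟫ = (⇑w) ⬝ᵥ d := by
    intro w d
    simp [PiLp.inner_apply, dotProduct, RCLike.inner_apply]
    exact Finset.sum_congr rfl fun _ _ => mul_comm _ _
  have key : ∀ k, ⟪b k, z⟫ = L k * ⟪b k, x⟫ := by
    intro k
    rw [hz, hx, hinner, hinner]
    rw [dotProduct_mulVec, ← Matrix.mulVec_transpose, hDT,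
      hD.mulVec_eigenvectorBasis k, smul_dotProduct]
    simp [smul_eq_mul]
    rfl
  have hzz : ⟪z, z⟫ = ∑ i, ((D *ᵥ c) i)^2 := by
    rw [hz, hinner]
    simp [dotProduct, pow_two]
  have hxz : ⟪x, z⟫ = c ⬝ᵥ (D *ᵥ c) := by
    rw [hz, hinner]; rfl
  have hxx : ⟪x, x⟫ = ∑ i, (c i)^2 := by
    rw [hx, hinner]
    simp [dotProduct, pow_two]
  have e1 : ∑ i, ((D *ᵥ c) i)^2 = ∑ k, (L k * ⟪b k, x⟫) * (L k * ⟪b k, x⟫) := by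
    rw [← hzz, ← b.sum_inner_mul_inner z z]
    refine Finset.sum_congr rfl fun k _ => ?_
    rw [real_inner_comm (b k) z, key k]
  have e2 : c ⬝ᵥ (D *ᵥ c) = ∑ k, ⟪b k, x⟫ * (L k * ⟪b k, x⟫) := by
    rw [← hxz, ← b.sum_inner_mul_inner x z]
    refine Finset.sum_congr rfl fun k _ => ?_
    rw [real_inner_comm (b k) x, key k]
  have e3 : ∑ i, (c i)^2 = ∑ k, ⟪b k, x⟫ * ⟪b k, x⟫ := by
    rw [← hxx, ← b.sum_inner_mul_inner x x]
    refine Finset.sum_congr rfl fun k _ => ?_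
    rw [real_inner_comm (b k) x]
  constructor
  · rw [e1, e2, Finset.mul_sum]
    refine Finset.sum_le_sum fun k _ => ?_
    have h3 := mul_le_mul_of_nonneg_right (hμ k) (mul_nonneg (hnn k) (sq_nonneg (inner ℝ (b k) x : ℝ)))
    nlinarith [h3]
  · rw [e2, e3, Finset.mul_sum]
    refine Finset.sum_le_sum fun k _ => ?_
    have h3 := mul_le_mul_of_nonneg_right (hμ k) (sq_nonneg (inner ℝ (b k) x : ℝ))
    nlinarith [h3]

theorem top_eigenvalue_is_max_sum_sq_scores
    {E : Type*} [NormedAddCommGroup E] [InnerProductSpace ℝ E]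
    (n : ℕ) (hn : 1 ≤ n) (v : Fin n → E) (hv : ∃ j, v j ≠ 0)
    (D : Matrix (Fin n) (Fin n) ℝ) (hDdef : ∀ k l, D k l = ⟪v k, v l⟫)
    (hD : D.IsHermitian) :
    IsGreatest
      {r : ℝ | ∃ ζ : E, ζ ∈ Submodule.span ℝ (Set.range v) ∧ ‖ζ‖ = 1 ∧
        r = ∑ i, ⟪ζ, v i⟫ ^ 2}
      (⨆ k, hD.eigenvalues k) := by
  classical
  have hne : Nonempty (Fin n) := ⟨⟨0, hn⟩⟩
  set L := hD.eigenvalues with hL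
  have hDT : Dᵀ = D := by simpa [Matrix.IsSymm] using hD
  -- inner products of combinations
  have lemA : ∀ (c : Fin n → ℝ) (i : Fin n), ⟪∑ k, c k • v k, v i⟫ = (D *ᵥ c) i := by
    intro c i
    rw [sum_inner]
    simp only [real_inner_smul_left, Matrix.mulVec, dotProduct]
    refine Finset.sum_congr rfl fun k _ => ?_
    rw [hDdef i k, real_inner_comm (v k) (v i)]
    ring
  have lemB : ∀ (c : Fin n → ℝ), ⟪∑ k, c k • v k, ∑ k, c k • v k⟫ = c ⬝ᵥ (D *ᵥ c) := by
    intro c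
    rw [inner_sum]
    simp only [real_inner_smul_right, lemA]
    simp [dotProduct, mul_comm]
  -- positive semidefiniteness
  have hPSD : D.PosSemidef := by
    refine Matrix.PosSemidef.of_dotProduct_mulVec_nonneg hD fun c => ?_
    have := lemB c
    simp only [star_trivial]
    rw [← this]
    simpa using real_inner_self_nonneg (x := ∑ k, c k • v k)
  have hnn : ∀ k, 0 ≤ L k := fun k => hPSD.eigenvalues_nonneg k
  set μ := ⨆ k, L k with hμdef
  have hμ : ∀ k, L k ≤ μ := fun k =>
    le_ciSup (Set.Finite.bddAbove (Set.finite_range L)) k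
  -- μ is positive
  obtain ⟨j, hj⟩ := hv
  have hjj : 0 < D j j := by
    rw [hDdef j j, real_inner_self_eq_norm_sq]
    exact pow_pos (norm_pos_iff.mpr hj) 2
  have hμpos : 0 < μ := by
    have h2 := (gram_dot_aux D hD hnn hμ (Pi.single j 1)).2
    have hdot : (Pi.single j 1 : Fin n → ℝ) ⬝ᵥ (D *ᵥ Pi.single j 1) = D j j := by
      simp [dotProduct, Matrix.mulVec, Pi.single_apply, Finset.sum_ite_eq',
        Finset.mul_sum]
    have hsq : ∑ i, (Pi.single j 1 : Fin n → ℝ) i ^ 2 = 1 := by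
      simp [Pi.single_apply, Finset.sum_ite_eq']
    rw [hdot, hsq, mul_one] at h2
    linarith
  constructor
  · -- membership: the maximum is attained
    obtain ⟨k₀, hk₀⟩ := Finite.exists_max L
    have hμk : μ = L k₀ := le_antisymm (ciSup_le hk₀) (hμ k₀)
    set u : Fin n → ℝ := ⇑(hD.eigenvectorBasis k₀) with hu
    have hDu : D *ᵥ u = μ • u := by
      rw [hμk]; exact hD.mulVec_eigenvectorBasis k₀
    have husq : ∑ i, u i ^ 2 = 1 := by
      have h1 : ⟪hD.eigenvectorBasis k₀, hD.eigenvectorBasis k₀⟫ = 1 := by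
        rw [real_inner_self_eq_norm_sq, hD.eigenvectorBasis.orthonormal.1 k₀]
        norm_num
      rw [← h1]
      simp only [PiLp.inner_apply, RCLike.inner_apply, starRingEnd_apply, star_trivial, pow_two]
      rfl
    refine ⟨(Real.sqrt μ)⁻¹ • ∑ k, u k • v k, ?_, ?_, ?_⟩
    · exact Submodule.smul_mem _ _ (Submodule.sum_mem _ fun k _ =>
        Submodule.smul_mem _ _ (Submodule.subset_span ⟨k, rfl⟩))
    · have hζζ : ⟪(Real.sqrt μ)⁻¹ • ∑ k, u k • v k, (Real.sqrt μ)⁻¹ • ∑ k, u k • v k⟫ = 1 := by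
        rw [real_inner_smul_left, real_inner_smul_right, lemB, hDu]
        have : u ⬝ᵥ (μ • u) = μ * ∑ i, u i ^ 2 := by
          simp only [dotProduct, Pi.smul_apply, smul_eq_mul, Finset.mul_sum, pow_two]
          exact Finset.sum_congr rfl fun i _ => by ring
        rw [this, husq, mul_one]
        rw [← mul_assoc, ← mul_inv, Real.mul_self_sqrt hμpos.le]
        field_simp
      have h2 : ‖(Real.sqrt μ)⁻¹ • ∑ k, u k • v k‖ ^ 2 = 1 := by
        rw [← real_inner_self_eq_norm_sq]; exact hζζ
      nlinarith [norm_nonneg ((Real.sqrt μ)⁻¹ • ∑ k, u k • v k)]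
    · have hiz : ∀ i, ⟪(Real.sqrt μ)⁻¹ • ∑ k, u k • v k, v i⟫ = (Real.sqrt μ)⁻¹ * (μ * u i) := by
        intro i
        rw [real_inner_smul_left, lemA, hDu]
        simp [smul_eq_mul]
      rw [Finset.sum_congr rfl fun i _ => by rw [hiz i]]
      have : ∑ i, ((Real.sqrt μ)⁻¹ * (μ * u i)) ^ 2
          = (Real.sqrt μ)⁻¹ ^ 2 * μ ^ 2 * ∑ i, u i ^ 2 := by
        rw [Finset.mul_sum]
        refine Finset.sum_congr rfl fun i _ => by ring
      rw [this, husq, mul_one, inv_pow, Real.sq_sqrt hμpos.le]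
      field_simp
  · -- upper bound
    rintro r ⟨ζ, hζmem, hζnorm, rfl⟩
    obtain ⟨c, hc⟩ := (Submodule.mem_span_range_iff_exists_fun ℝ).mp hζmem
    have h1 := (gram_dot_aux D hD hnn hμ c).1
    have h2 : ∑ i, ⟪ζ, v i⟫ ^ 2 = ∑ i, ((D *ᵥ c) i)^2 := by
      refine Finset.sum_congr rfl fun i _ => ?_
      rw [← hc, lemA]
    have h3 : c ⬝ᵥ (D *ᵥ c) = 1 := by
      rw [← lemB, hc, real_inner_self_eq_norm_sq, hζnorm]; norm_num
    rw [h2]; rw [h3, mul_one] at h1; exact h1
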